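/- Let (X_i)_{i∈ℕ} be i.i.d. samples from μ, and let (W_i)_{i∈ℕ} be i.i.d. real random variables, independent of the X_i, whose common law is supported on the interval [a,b] and absolutely continuous with density bounded below by κ_p > 0 on [a,b]. For each T set Y_T^max = max_{1≤i≤T} (f(X_i) + W_i). Then for any sequence of positive reals (ω_T) with ω_T → ∞ and ω_T = o(T), the quantity (T/ω_T)^{1/(d_s+1)}·(f* + b − Y_T^max) converges to 0 in probability as T → ∞. -/

import Mathlib

open MeasureTheory ProbabilityTheory Real Filter

/-- **Random search in noisy environments (Theorem `thm:rs-noisy`).**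
Let `(X i)` be i.i.d. samples from `μ` and `(W i)` i.i.d. real noise, independent of the
`X i`, whose common law has a density supported on `[a, b]` and bounded below by
`κp > 0` there (so that the pairs `(X i, W i)` are i.i.d. with law `μ × ν`).
Setting `Y T = max_{1 ≤ i ≤ T} (f (X i) + W i)`, for any positive sequence `ω_T → ∞`
with `ω_T = o(T)`, the quantity `(T / ω_T)^{1/(ds+1)} (f* + b - Y T)` converges to `0`
in probability. -/
theorem noisy_random_search_convergence_in_probability
    {𝒳 : Type*} [MetricSpace 𝒳] [CompactSpace 𝒳] [MeasurableSpace 𝒳] [BorelSpace 𝒳]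
    (μ : Measure 𝒳) [IsProbabilityMeasure μ]
    (f : 𝒳 → ℝ) (L : ℝ) (hL : 0 ≤ L) (hf : LipschitzWith L.toNNReal f)
    (fstar fmin Θ : ℝ)
    (hfstar : fstar = ⨆ x, f x) (hfmin : fmin = ⨅ x, f x)
    (hΘ : Θ = Metric.diam (Set.univ : Set 𝒳))
    (ds κs : ℝ) (hds : 0 < ds) (hκs : κs ∈ Set.Ioc (0 : ℝ) 1)
    (hscatter : ∀ α ∈ Set.Ioc (0 : ℝ) 1,
      μ {x | f x < fstar - α * (fstar - fmin)} ≤ ENNReal.ofReal (1 - κs * α ^ ds))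
    (a b : ℝ) (hab : a < b) (κp : ℝ) (hκp : 0 < κp)
    (g : ℝ → ENNReal) (hg : Measurable g)
    (hsupp : ∀ x ∉ Set.Icc a b, g x = 0)
    (hlb : ∀ x ∈ Set.Icc a b, ENNReal.ofReal κp ≤ g x)
    {Ω : Type*} [MeasurableSpace Ω] (P : Measure Ω) [IsProbabilityMeasure P]
    (X : ℕ → Ω → 𝒳) (W : ℕ → Ω → ℝ)
    (hXmeas : ∀ i, Measurable (X i)) (hWmeas : ∀ i, Measurable (W i))
    (hiid : iIndepFun (fun i ω => (X i ω, W i ω)) P)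
    (hlaw : ∀ i, Measure.map (fun ω => (X i ω, W i ω)) P
      = μ.prod (volume.withDensity g))
    (w : ℕ → ℝ) (hwpos : ∀ T, 0 < w T)
    (hw_top : Tendsto w atTop atTop)
    (hw_o : Tendsto (fun T : ℕ => w T / T) atTop (nhds 0))
    (β : ℝ) (hβ : 0 < β) :
    Tendsto
      (fun T : ℕ =>
        P {ω | ((T : ℝ) / w T) ^ ((1 : ℝ) / (ds + 1)) *
            (fstar + b - ⨆ i : Fin T, (f (X i ω) + W i ω)) > β})
      atTop (nhds 0) := by
  classical
  have hX : Nonempty 𝒳 := by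
    by_contra h
    rw [not_nonempty_iff] at h
    have h1 : (μ Set.univ : ENNReal) = 1 := measure_univ
    rw [Set.univ_eq_empty_iff.2 h, measure_empty] at h1
    exact zero_ne_one h1
  haveI := hX
  have hfc : Continuous f := hf.continuous
  have hΔ : 0 ≤ fstar - fmin := by
    rw [hfstar, hfmin, sub_nonneg]
    have hx0 := Classical.arbitrary 𝒳
    exact le_trans (ciInf_le (isCompact_range hfc).bddBelow hx0)
      (le_ciSup (isCompact_range hfc).bddAbove hx0)
  set Δ : ℝ := fstar - fmin with hΔdef
  set ν : Measure ℝ := volume.withDensity g with hν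
  set c2 : ℝ := 2 * (Δ + 1) with hc2
  have hc2pos : 0 < c2 := by positivity
  have hc2ds : 0 < c2 ^ ds := Real.rpow_pos_of_pos hc2pos ds
  set C : ℝ := κs * κp / 2 / c2 ^ ds with hC
  have hCpos : 0 < C := by
    apply div_pos _ hc2ds
    have := hκs.1
    positivity
  set p : ℝ := 1 / (ds + 1) with hp
  have hds1 : (0 : ℝ) < ds + 1 := by linarith
  have hppos : 0 < p := by positivity
  haveI : IsProbabilityMeasure (μ.prod ν) := by
    rw [← hlaw 0]
    exact Measure.isProbabilityMeasure_map ((hXmeas 0).prodMk (hWmeas 0)).aemeasurable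
  haveI hSFν : SFinite ν := inferInstance
  clear_value Δ ν c2 C p
  -- key measure lower bound
  have hkey : ∀ ε : ℝ, 0 < ε → ε ≤ c2 → ε ≤ 2 * (b - a) →
      ENNReal.ofReal (C * ε ^ (ds + 1)) ≤
        (μ.prod ν) {q : 𝒳 × ℝ | fstar + b - ε ≤ f q.1 + q.2} := by
    intro ε hε hεc2 hεba
    set α : ℝ := ε / c2 with hα
    have hα0 : 0 < α := div_pos hε hc2pos
    have hα1 : α ≤ 1 := (div_le_one hc2pos).2 hεc2
    have hαΔ : α * Δ ≤ ε / 2 := by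
      rw [hα, hc2, div_mul_eq_mul_div, div_le_div_iff₀ (by positivity) two_pos]
      nlinarith
    clear_value α
    -- the rectangle
    have hsub : {x : 𝒳 | fstar - α * Δ ≤ f x} ×ˢ Set.Icc (b - ε / 2) b ⊆
        {q : 𝒳 × ℝ | fstar + b - ε ≤ f q.1 + q.2} := by
      rintro ⟨x, t⟩ ⟨hx, ht⟩
      have hx' : fstar - α * Δ ≤ f x := hx
      have h2 : b - ε / 2 ≤ t := ht.1
      show fstar + b - ε ≤ f x + t
      linarith
    have hmsA : MeasurableSet {x : 𝒳 | f x < fstar - α * Δ} :=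
      measurableSet_lt hfc.measurable measurable_const
    -- μ part
    have hq01 : 0 < κs * α ^ ds ∧ κs * α ^ ds ≤ 1 := by
      constructor
      · exact mul_pos hκs.1 (Real.rpow_pos_of_pos hα0 ds)
      · calc κs * α ^ ds ≤ 1 * 1 := by
              apply mul_le_mul hκs.2 (Real.rpow_le_one hα0.le hα1 hds.le)
                (Real.rpow_pos_of_pos hα0 ds).le zero_le_one
          _ = 1 := by ring
    have hμA : ENNReal.ofReal (κs * α ^ ds) ≤ μ {x : 𝒳 | fstar - α * Δ ≤ f x} := by
      have hcompl : {x : 𝒳 | fstar - α * Δ ≤ f x} = {x : 𝒳 | f x < fstar - α * Δ}ᶜ := by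
        ext x; simp [not_lt]
      have hsc := hscatter α ⟨hα0, hα1⟩
      rw [hcompl, measure_compl hmsA (measure_ne_top μ _), measure_univ]
      have hsum : ENNReal.ofReal (κs * α ^ ds) + ENNReal.ofReal (1 - κs * α ^ ds) = 1 := by
        rw [← ENNReal.ofReal_add hq01.1.le (by linarith [hq01.2])]
        norm_num
      calc ENNReal.ofReal (κs * α ^ ds)
          = (ENNReal.ofReal (κs * α ^ ds) + ENNReal.ofReal (1 - κs * α ^ ds))
              - ENNReal.ofReal (1 - κs * α ^ ds) :=
            (ENNReal.add_sub_cancel_right ENNReal.ofReal_ne_top).symm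
        _ = 1 - ENNReal.ofReal (1 - κs * α ^ ds) := by rw [hsum]
        _ ≤ 1 - μ {x : 𝒳 | f x < fstar - α * Δ} := tsub_le_tsub_left hsc 1
    -- ν part
    have hνI : ENNReal.ofReal (κp * (ε / 2)) ≤ ν (Set.Icc (b - ε / 2) b) := by
      have hsubI : Set.Icc (b - ε / 2) b ⊆ Set.Icc a b := by
        apply Set.Icc_subset_Icc _ le_rfl
        linarith
      rw [hν, withDensity_apply g measurableSet_Icc]
      calc ENNReal.ofReal (κp * (ε / 2))
          = ENNReal.ofReal κp * ENNReal.ofReal (ε / 2) := ENNReal.ofReal_mul hκp.le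
        _ = ENNReal.ofReal κp * volume (Set.Icc (b - ε / 2) b) := by
            rw [Real.volume_Icc]; norm_num
        _ = ∫⁻ _ in Set.Icc (b - ε / 2) b, ENNReal.ofReal κp := by
            rw [setLIntegral_const]
        _ ≤ ∫⁻ x in Set.Icc (b - ε / 2) b, g x :=
            setLIntegral_mono hg fun x hx => hlb x (hsubI hx)
    -- combine
    have hrect : ENNReal.ofReal (C * ε ^ (ds + 1)) ≤
        (μ.prod ν) ({x : 𝒳 | fstar - α * Δ ≤ f x} ×ˢ Set.Icc (b - ε / 2) b) := by
      rw [Measure.prod_prod]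
      have heq : C * ε ^ (ds + 1) = (κs * α ^ ds) * (κp * (ε / 2)) := by
        rw [hC, hα, Real.div_rpow hε.le hc2pos.le, Real.rpow_add_one hε.ne' ds]
        field_simp
      rw [heq, ENNReal.ofReal_mul hq01.1.le]
      exact mul_le_mul' hμA hνI
    exact hrect.trans (measure_mono hsub)
  -- the epsilon sequence
  set ε : ℕ → ℝ := fun T => β * (w T / T) ^ p with hεdef
  have hεto0 : Tendsto ε atTop (nhds 0) := by
    have hc : ContinuousAt (fun x : ℝ => x ^ p) 0 :=
      Real.continuousAt_rpow_const 0 p (Or.inr hppos.le)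
    have h0 : Tendsto (fun T : ℕ => (w T / T) ^ p) atTop (nhds 0) := by
      have := hc.tendsto.comp hw_o
      rwa [Real.zero_rpow hppos.ne'] at this
    have := h0.const_mul β
    simpa using this
  -- the final upper bound sequence
  have hCβ : 0 < C * β ^ (ds + 1) := mul_pos hCpos (Real.rpow_pos_of_pos hβ _)
  have htop : Tendsto (fun T : ℕ => ENNReal.ofReal (Real.exp (-(C * β ^ (ds + 1) * w T))))
      atTop (nhds 0) := by
    have h1 : Tendsto (fun T : ℕ => C * β ^ (ds + 1) * w T) atTop atTop :=
      hw_top.const_mul_atTop hCβ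
    have h2 : Tendsto (fun T : ℕ => -(C * β ^ (ds + 1) * w T)) atTop atBot :=
      tendsto_neg_atBot_iff.mpr h1
    have h3 := Real.tendsto_exp_atBot.comp h2
    have h4 := (ENNReal.continuous_ofReal.tendsto (0 : ℝ)).comp h3
    simpa [Function.comp_def] using h4
  -- main pointwise bound for large T
  have hbound : ∀ T : ℕ, 1 ≤ T → ε T ≤ c2 → ε T ≤ 2 * (b - a) →
      P {ω | ((T : ℝ) / w T) ^ p *
            (fstar + b - ⨆ i : Fin T, (f (X i ω) + W i ω)) > β}
        ≤ ENNReal.ofReal (Real.exp (-(C * β ^ (ds + 1) * w T))) := by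
    intro T hT hεc2 hεba
    have hTpos : (0 : ℝ) < T := by exact_mod_cast hT
    have hu : 0 < w T / T := div_pos (hwpos T) hTpos
    have hεpos : 0 < ε T := mul_pos hβ (Real.rpow_pos_of_pos hu p)
    set c : ℝ := fstar + b - ε T with hc
    set S : Set (𝒳 × ℝ) := {q : 𝒳 × ℝ | f q.1 + q.2 < c} with hS
    have hSmeas : MeasurableSet S :=
      measurableSet_lt ((hfc.comp continuous_fst).add continuous_snd).measurable
        measurable_const
    -- event inclusion
    have hincl : {ω | ((T : ℝ) / w T) ^ p *
          (fstar + b - ⨆ i : Fin T, (f (X i ω) + W i ω)) > β}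
        ⊆ ⋂ i ∈ Finset.range T, (fun ω => (X i ω, W i ω)) ⁻¹' S := by
      intro ω hω
      simp only [Set.mem_setOf_eq, gt_iff_lt] at hω
      have hrpos : 0 < ((T : ℝ) / w T) ^ p :=
        Real.rpow_pos_of_pos (div_pos hTpos (hwpos T)) _
      have hrinv : (((T : ℝ) / w T) ^ p)⁻¹ = (w T / T) ^ p := by
        rw [← Real.inv_rpow (div_pos hTpos (hwpos T)).le, inv_div, hp]
      have hY : (⨆ i : Fin T, (f (X i ω) + W i ω)) < c := by
        have h1 : β / ((T : ℝ) / w T) ^ p <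
            fstar + b - ⨆ i : Fin T, (f (X i ω) + W i ω) := by
          rw [div_lt_iff₀ hrpos]
          linarith [hω]
        rw [div_eq_mul_inv, hrinv] at h1
        have : ε T = β * (w T / T) ^ p := rfl
        rw [hc]
        linarith
      simp only [Set.mem_iInter, Finset.mem_range]
      intro i hi
      have hle : f (X i ω) + W i ω ≤ ⨆ i : Fin T, (f (X i ω) + W i ω) :=
        le_ciSup (f := fun j : Fin T => f (X j ω) + W j ω)
          (Set.finite_range _).bddAbove (⟨i, hi⟩ : Fin T)
      simp only [Set.mem_preimage, hS, Set.mem_setOf_eq]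
      exact lt_of_le_of_lt hle hY
    -- independence product
    have hprod : P (⋂ i ∈ Finset.range T, (fun ω => (X i ω, W i ω)) ⁻¹' S)
        = ((μ.prod ν) S) ^ T := by
      rw [hiid.meas_biInter (fun i _ => ⟨S, hSmeas, rfl⟩)]
      have heach : ∀ i, P ((fun ω => (X i ω, W i ω)) ⁻¹' S) = (μ.prod ν) S := by
        intro i
        rw [← Measure.map_apply ((hXmeas i).prodMk (hWmeas i)) hSmeas, hlaw i]
      rw [Finset.prod_congr rfl fun i _ => heach i, Finset.prod_const, Finset.card_range]
    -- bound on single-step measure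
    set q : ℝ := C * (ε T) ^ (ds + 1) with hq
    have hqnn : 0 ≤ q := by
      have := Real.rpow_nonneg hεpos.le (ds + 1)
      positivity
    have hm : (μ.prod ν) S ≤ ENNReal.ofReal (Real.exp (-q)) := by
      have hScompl : Sᶜ = {r : 𝒳 × ℝ | fstar + b - ε T ≤ f r.1 + r.2} := by
        ext r; simp [hS, hc, not_lt]
      have hk := hkey (ε T) hεpos hεc2 hεba
      rw [← hScompl] at hk
      have hcompl : (μ.prod ν) Sᶜ = 1 - (μ.prod ν) S := by
        rw [measure_compl hSmeas (measure_ne_top _ _), measure_univ]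
      rw [hcompl] at hk
      have hm1 : (μ.prod ν) S ≤ 1 - ENNReal.ofReal q := by
        have : (μ.prod ν) S = 1 - (1 - (μ.prod ν) S) :=
          (ENNReal.sub_sub_cancel ENNReal.one_ne_top prob_le_one).symm
        rw [this]
        exact tsub_le_tsub_left hk 1
      have hm2 : (1 : ENNReal) - ENNReal.ofReal q ≤ ENNReal.ofReal (Real.exp (-q)) := by
        rw [← ENNReal.ofReal_one, ← ENNReal.ofReal_sub 1 hqnn]
        apply ENNReal.ofReal_le_ofReal
        linarith [Real.add_one_le_exp (-q)]
      exact hm1.trans hm2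
    -- exponent computation
    have hexp : (ε T) ^ (ds + 1) = β ^ (ds + 1) * (w T / T) := by
      have h1 : ε T = β * (w T / T) ^ p := rfl
      rw [h1, Real.mul_rpow hβ.le (Real.rpow_nonneg hu.le p),
        ← Real.rpow_mul hu.le]
      congr 1
      rw [hp, one_div, inv_mul_cancel₀ hds1.ne', Real.rpow_one]
    have hTq : (T : ℝ) * q = C * β ^ (ds + 1) * w T := by
      rw [hq, hexp]
      field_simp
    calc P {ω | ((T : ℝ) / w T) ^ p *
            (fstar + b - ⨆ i : Fin T, (f (X i ω) + W i ω)) > β}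
        ≤ P (⋂ i ∈ Finset.range T, (fun ω => (X i ω, W i ω)) ⁻¹' S) := measure_mono hincl
      _ = ((μ.prod ν) S) ^ T := hprod
      _ ≤ (ENNReal.ofReal (Real.exp (-q))) ^ T := pow_le_pow_left' hm T
      _ = ENNReal.ofReal ((Real.exp (-q)) ^ T) := (ENNReal.ofReal_pow (Real.exp_nonneg _) T).symm
      _ = ENNReal.ofReal (Real.exp (-(C * β ^ (ds + 1) * w T))) := by
          rw [← Real.exp_nat_mul, ← hTq]
          ring_nf
  -- squeeze
  apply tendsto_of_tendsto_of_tendsto_of_le_of_le' tendsto_const_nhds htop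
  · exact Eventually.of_forall fun _ => zero_le
  · have hmin : (0 : ℝ) < min c2 (2 * (b - a)) := lt_min hc2pos (by linarith)
    have hE1 : ∀ᶠ T in atTop, ε T < min c2 (2 * (b - a)) :=
      hεto0.eventually_lt_const hmin
    filter_upwards [hE1, eventually_ge_atTop 1] with T h1 h2
    exact hbound T h2 (h1.le.trans (min_le_left _ _)) (h1.le.trans (min_le_right _ _))
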